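/- One has ∫_ℝ e^{√2 · y} ( 2 sech²(y) − 6 sech⁴(y) ) dy = 0 and ∫_ℝ e^{−√2 · y} ( 2 sech²(y) − 6 sech⁴(y) ) dy = 0. -/

import Mathlib

open MeasureTheory Real Filter Set
open scoped Topology

noncomputable def sech (x : ℝ) : ℝ := (Real.cosh x)⁻¹

lemma exp_abs_le_two_cosh (y : ℝ) : Real.exp |y| ≤ 2 * Real.cosh y := by
  rw [Real.cosh_eq]
  rcases abs_cases y with ⟨h, _⟩ | ⟨h, _⟩ <;> rw [h] <;>
    nlinarith [Real.exp_pos y, Real.exp_pos (-y)]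

lemma sech_pos (y : ℝ) : 0 < sech y := inv_pos.mpr (Real.cosh_pos y)

lemma sech_le_one (y : ℝ) : sech y ≤ 1 := by
  rw [sech]
  exact inv_le_one_of_one_le₀ (Real.one_le_cosh y)

lemma sech_le (y : ℝ) : sech y ≤ 2 * Real.exp (-|y|) := by
  have h : Real.exp |y| / 2 ≤ Real.cosh y := by linarith [exp_abs_le_two_cosh y]
  calc sech y ≤ (Real.exp |y| / 2)⁻¹ :=
        inv_anti₀ (by positivity) h
    _ = 2 * Real.exp (-|y|) := by
        rw [Real.exp_neg, inv_div, div_eq_mul_inv]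

lemma norm_integrand_le (s y : ℝ) :
    ‖Real.exp (s * y) * (2 * sech y ^ 2 - 6 * sech y ^ 4)‖ ≤
      32 * Real.exp (s * y - 2 * |y|) := by
  have h1 := sech_pos y
  have h2 := sech_le_one y
  have h3 := sech_le y
  have he := Real.exp_pos (s * y)
  have hne := Real.exp_pos (-|y|)
  have hsq : sech y ^ 2 ≤ 4 * Real.exp (-|y|) ^ 2 := by nlinarith
  have h2' : sech y ^ 2 ≤ 1 := by nlinarith
  have ha4 : sech y ^ 4 ≤ sech y ^ 2 := by
    nlinarith [mul_nonneg (sub_nonneg.mpr h2') (sq_nonneg (sech y))]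
  have habs : |2 * sech y ^ 2 - 6 * sech y ^ 4| ≤ 8 * sech y ^ 2 := by
    rw [abs_le]; constructor <;> nlinarith
  have : Real.exp (s * y - 2 * |y|) = Real.exp (s * y) * Real.exp (-|y|) ^ 2 := by
    rw [← Real.exp_nat_mul, ← Real.exp_add]; ring_nf
  rw [norm_mul, Real.norm_eq_abs, Real.norm_eq_abs, abs_of_pos he, this]
  calc Real.exp (s * y) * |2 * sech y ^ 2 - 6 * sech y ^ 4|
      ≤ Real.exp (s * y) * (8 * sech y ^ 2) := by nlinarith
    _ ≤ Real.exp (s * y) * (8 * (4 * Real.exp (-|y|) ^ 2)) := by nlinarith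
    _ = 32 * (Real.exp (s * y) * Real.exp (-|y|) ^ 2) := by ring

lemma integrableOn_exp_mul_Iic' {b : ℝ} (hb : 0 < b) :
    IntegrableOn (fun y : ℝ => Real.exp (b * y)) (Set.Iic (0 : ℝ)) := by
  have hmap : (volume.restrict (Set.Ici (0 : ℝ))).map Neg.neg
      = volume.restrict (Set.Iic (0 : ℝ)) := by
    conv => rhs; rw [← Measure.map_neg_eq_self (volume : Measure ℝ),
      measurableEmbedding_neg.restrict_map]
    simp
  rw [IntegrableOn, ← hmap, measurableEmbedding_neg.integrable_map_iff]
  have h2 : IntegrableOn (fun x : ℝ => Real.exp (-b * x)) (Set.Ici (0 : ℝ)) := by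
    rw [integrableOn_Ici_iff_integrableOn_Ioi]
    exact exp_neg_integrableOn_Ioi 0 hb
  exact h2.congr_fun (fun x _ => by simp [Function.comp, mul_neg, neg_mul])
    measurableSet_Ici

lemma integrand_integrable {s : ℝ} (hs0 : 0 ≤ s) (hs2 : s < 2) :
    Integrable (fun y : ℝ => Real.exp (s * y) * (2 * sech y ^ 2 - 6 * sech y ^ 4)) := by
  have hcont : Continuous fun y : ℝ =>
      Real.exp (s * y) * (2 * sech y ^ 2 - 6 * sech y ^ 4) := by
    have hcs : Continuous sech :=
      Real.continuous_cosh.inv₀ fun x => (Real.cosh_pos x).ne'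
    fun_prop
  rw [← integrableOn_univ, ← Set.Iic_union_Ioi (a := (0 : ℝ)), integrableOn_union]
  constructor
  · have hg : IntegrableOn (fun y : ℝ => 32 * Real.exp ((s + 2) * y)) (Set.Iic (0 : ℝ)) :=
      (integrableOn_exp_mul_Iic' (by linarith)).const_mul 32
    refine Integrable.mono' hg hcont.aestronglyMeasurable.restrict ?_
    filter_upwards [ae_restrict_mem measurableSet_Iic] with y hy
    have h := norm_integrand_le s y
    rw [abs_of_nonpos hy, show s * y - 2 * -y = (s + 2) * y by ring] at h
    exact h
  · have hg : IntegrableOn (fun y : ℝ => 32 * Real.exp (-(2 - s) * y)) (Set.Ioi (0 : ℝ)) :=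
      (exp_neg_integrableOn_Ioi 0 (by linarith)).const_mul 32
    refine Integrable.mono' hg hcont.aestronglyMeasurable.restrict ?_
    filter_upwards [ae_restrict_mem measurableSet_Ioi] with y hy
    have h := norm_integrand_le s y
    rw [abs_of_pos hy, show s * y - 2 * y = -(2 - s) * y by ring] at h
    exact h

lemma F_hasDerivAt {s : ℝ} (hs : s ^ 2 = 2) (y : ℝ) :
    HasDerivAt (fun y => (-s * Real.cosh y - 2 * Real.sinh y) * Real.exp (s * y) / Real.cosh y ^ 3)
      (Real.exp (s * y) * (2 * sech y ^ 2 - 6 * sech y ^ 4)) y := by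
  have hc : Real.cosh y ≠ 0 := (Real.cosh_pos y).ne'
  have h1 : HasDerivAt (fun y => -s * Real.cosh y - 2 * Real.sinh y)
      (-s * Real.sinh y - 2 * Real.cosh y) y :=
    ((Real.hasDerivAt_cosh y).const_mul (-s)).sub ((Real.hasDerivAt_sinh y).const_mul 2)
  have h2 : HasDerivAt (fun y : ℝ => Real.exp (s * y)) (Real.exp (s * y) * s) y := by
    simpa [Function.comp_def] using (Real.hasDerivAt_exp (s * y)).comp y ((hasDerivAt_id y).const_mul s)
  have h3 : HasDerivAt (fun y => Real.cosh y ^ 3) (3 * Real.cosh y ^ 2 * Real.sinh y) y := by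
    simpa [Pi.pow_def] using (Real.hasDerivAt_cosh y).pow 3
  have h4 := (h1.fun_mul h2).fun_div h3 (pow_ne_zero 3 hc)
  refine h4.congr_deriv ?_; symm
  have hsq : Real.sinh y ^ 2 = Real.cosh y ^ 2 - 1 := Real.sinh_sq y
  unfold sech
  field_simp
  linear_combination Real.cosh y ^ 2 * hs - 6 * hsq

lemma F_norm_le {s : ℝ} (hs0 : 0 ≤ s) (y : ℝ) :
    ‖(-s * Real.cosh y - 2 * Real.sinh y) * Real.exp (s * y) / Real.cosh y ^ 3‖ ≤
      4 * (s + 2) * Real.exp (s * y - 2 * |y|) := by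
  have hc := Real.cosh_pos y
  have hsc1 : Real.sinh y < Real.cosh y := by
    nlinarith [Real.cosh_sub_sinh y, Real.exp_pos (-y)]
  have hsc2 : -Real.cosh y < Real.sinh y := by
    nlinarith [Real.cosh_add_sinh y, Real.exp_pos y]
  have h1 : |(-s * Real.cosh y - 2 * Real.sinh y)| ≤ (s + 2) * Real.cosh y := by
    rw [abs_le]; constructor <;> nlinarith
  have h2 := exp_abs_le_two_cosh y
  have h3 : Real.exp (s * y - 2 * |y|) * Real.exp |y| * Real.exp |y| = Real.exp (s * y) := by
    rw [← Real.exp_add, ← Real.exp_add]; ring_nf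
  rw [norm_div, norm_mul, Real.norm_eq_abs, Real.norm_eq_abs, Real.norm_eq_abs,
    abs_of_pos (Real.exp_pos _), abs_of_pos (pow_pos hc 3),
    div_le_iff₀ (by positivity)]
  calc |(-s * Real.cosh y - 2 * Real.sinh y)| * Real.exp (s * y)
      ≤ ((s + 2) * Real.cosh y) * Real.exp (s * y) :=
        mul_le_mul_of_nonneg_right h1 (Real.exp_pos _).le
    _ = (s + 2) * Real.cosh y *
        (Real.exp (s * y - 2 * |y|) * Real.exp |y| * Real.exp |y|) := by rw [h3]
    _ ≤ (s + 2) * Real.cosh y *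
        (Real.exp (s * y - 2 * |y|) * (2 * Real.cosh y) * (2 * Real.cosh y)) := by
        gcongr
    _ = 4 * (s + 2) * Real.exp (s * y - 2 * |y|) * Real.cosh y ^ 3 := by ring

lemma bound_tendsto_atTop {s : ℝ} (hs2 : s < 2) :
    Tendsto (fun y : ℝ => 4 * (s + 2) * Real.exp (s * y - 2 * |y|)) atTop (𝓝 0) := by
  have h1 : Tendsto (fun y : ℝ => (s - 2) * y) atTop atBot :=
    (tendsto_const_mul_atBot_of_neg (by linarith)).2 tendsto_id
  have h2 : Tendsto (fun y : ℝ => 4 * (s + 2) * Real.exp ((s - 2) * y)) atTop (𝓝 0) := by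
    have := (Real.tendsto_exp_atBot.comp h1).const_mul (4 * (s + 2))
    simpa using this
  refine h2.congr' ?_
  filter_upwards [eventually_ge_atTop (0 : ℝ)] with y hy
  rw [abs_of_nonneg hy]; ring_nf

lemma bound_tendsto_atBot {s : ℝ} (hs0 : 0 ≤ s) :
    Tendsto (fun y : ℝ => 4 * (s + 2) * Real.exp (s * y - 2 * |y|)) atBot (𝓝 0) := by
  have h1 : Tendsto (fun y : ℝ => (s + 2) * y) atBot atBot :=
    (tendsto_const_mul_atBot_of_pos (by linarith)).2 tendsto_id
  have h2 : Tendsto (fun y : ℝ => 4 * (s + 2) * Real.exp ((s + 2) * y)) atBot (𝓝 0) := by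
    have := (Real.tendsto_exp_atBot.comp h1).const_mul (4 * (s + 2))
    simpa using this
  refine h2.congr' ?_
  filter_upwards [eventually_le_atBot (0 : ℝ)] with y hy
  rw [abs_of_nonpos hy]; ring_nf

lemma first_integral {s : ℝ} (hs : s ^ 2 = 2) (hs0 : 0 ≤ s) :
    (∫ y : ℝ, Real.exp (s * y) * (2 * sech y ^ 2 - 6 * sech y ^ 4)) = 0 := by
  have hs2 : s < 2 := by nlinarith
  have htop : Tendsto
      (fun y => (-s * Real.cosh y - 2 * Real.sinh y) * Real.exp (s * y) / Real.cosh y ^ 3)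
      atTop (𝓝 0) :=
    squeeze_zero_norm (F_norm_le hs0) (bound_tendsto_atTop hs2)
  have hbot : Tendsto
      (fun y => (-s * Real.cosh y - 2 * Real.sinh y) * Real.exp (s * y) / Real.cosh y ^ 3)
      atBot (𝓝 0) :=
    squeeze_zero_norm (F_norm_le hs0) (bound_tendsto_atBot hs0)
  have h := integral_of_hasDerivAt_of_tendsto (F_hasDerivAt hs)
    (integrand_integrable hs0 hs2) hbot htop
  simpa using h

/-- Lemma 1.4 (vanishing bilateral Laplace transform condition (A6) for the 1D
focusing cubic NLS): `∫ e^{±√2 y} (2 sech²(y) − 6 sech⁴(y)) dy = 0`. -/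
theorem vanishing_laplace_transform_cubic_NLS :
    (∫ y : ℝ, Real.exp (Real.sqrt 2 * y) * (2 * sech y ^ 2 - 6 * sech y ^ 4)) = 0 ∧
    (∫ y : ℝ, Real.exp (-(Real.sqrt 2) * y) * (2 * sech y ^ 2 - 6 * sech y ^ 4)) = 0 := by
  have hs : Real.sqrt 2 ^ 2 = 2 := Real.sq_sqrt (by norm_num)
  have hs0 : (0 : ℝ) ≤ Real.sqrt 2 := Real.sqrt_nonneg 2
  have h1 := first_integral hs hs0
  refine ⟨h1, ?_⟩
  have h2 := integral_neg_eq_self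
    (fun y : ℝ => Real.exp (-(Real.sqrt 2) * y) * (2 * sech y ^ 2 - 6 * sech y ^ 4))
    (volume : Measure ℝ)
  rw [← h2]
  have : ∀ y : ℝ, Real.exp (-(Real.sqrt 2) * -y) * (2 * sech (-y) ^ 2 - 6 * sech (-y) ^ 4)
      = Real.exp (Real.sqrt 2 * y) * (2 * sech y ^ 2 - 6 * sech y ^ 4) := by
    intro y
    simp [sech, Real.cosh_neg, neg_mul, mul_neg]
  simp_rw [this]
  exact h1
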